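/- For every prime p with p ≡ 3 (mod 4), there exist primes e₁ and e₂ with e₁ ≡ 3 (mod 4) and e₂ ≡ 1 (mod 4) such that the Legendre symbols satisfy (p/e₁) = 1, (p/e₂) = 1, and (e₁/e₂) = −1. -/

import Mathlib

theorem exists_primes_e1_e2 (p : ℕ) (hp : p.Prime) (hp4 : p % 4 = 3) :
    ∃ e₁ e₂ : ℕ, e₁.Prime ∧ e₂.Prime ∧ e₁ % 4 = 3 ∧ e₂ % 4 = 1 ∧
      jacobiSym (p : ℤ) e₁ = 1 ∧ jacobiSym (p : ℤ) e₂ = 1 ∧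
      jacobiSym (e₁ : ℤ) e₂ = -1 := by
  haveI : Fact p.Prime := ⟨hp⟩
  have hp3 : 3 ≤ p := by
    rcases hp.two_le.lt_or_eq with h | h
    · omega
    · omega
  have hp2 : p ≠ 2 := by omega
  -- a nonsquare mod p
  obtain ⟨b, hb⟩ : ∃ b : ZMod p, ¬IsSquare b :=
    FiniteField.exists_nonsquare (by rwa [ZMod.ringChar_zmod_n])
  have hb0 : b ≠ 0 := fun h => hb (h ▸ IsSquare.zero)
  have hcop : Nat.Coprime 4 p := by
    have : ¬p ∣ 4 := by
      intro h
      have := (Nat.prime_dvd_prime_iff_eq hp Nat.prime_two).mp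
        (hp.dvd_of_dvd_pow (n := 2) (by norm_num [h] ))
      omega
    exact (hp.coprime_iff_not_dvd.mpr this).symm
  haveI : NeZero (4 * p) := ⟨by omega⟩
  set C := ZMod.chineseRemainder hcop with hC
  set a : ZMod (4 * p) := C.symm ((3 : ZMod 4), b) with haa
  have ha : IsUnit a := by
    refine (IsUnit.of_mul_eq_one (a := ((3 : ZMod 4), b)) ((3 : ZMod 4), b⁻¹) ?_).map C.symm
    refine Prod.ext_iff.mpr ⟨?_, mul_inv_cancel₀ hb0⟩
    show (3 : ZMod 4) * 3 = 1
    decide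
  obtain ⟨e₁, he₁gt, he₁p, he₁mod⟩ := Nat.forall_exists_prime_gt_and_eq_mod ha (4 * p)
  haveI : Fact e₁.Prime := ⟨he₁p⟩
  have hCe₁' : ((e₁ : ZMod 4 × ZMod p)) = ((3 : ZMod 4), b) := by
    have : C ((e₁ : ZMod (4 * p))) = C a := by rw [he₁mod]
    rwa [haa, RingEquiv.apply_symm_apply, map_natCast] at this
  have h4e₁ : (e₁ : ZMod 4) = 3 := by
    have := congrArg Prod.fst hCe₁'; simpa using this
  have he₁zp : (e₁ : ZMod p) = b := by
    have := congrArg Prod.snd hCe₁'; simpa using this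
  have he₁4 : e₁ % 4 = 3 := by
    have h4 : (e₁ : ZMod 4) = ((3 : ℕ) : ZMod 4) := by rw [h4e₁]; norm_num
    have := (ZMod.natCast_eq_natCast_iff e₁ 3 4).mp h4
    simpa [Nat.ModEq] using this
  have hJpe₁ : jacobiSym (e₁ : ℤ) p = -1 := by
    rw [← jacobiSym.legendreSym.to_jacobiSym]
    exact (legendreSym.eq_neg_one_iff' p).mpr (he₁zp ▸ hb)
  have hJ1 : jacobiSym (p : ℤ) e₁ = 1 := by
    rw [jacobiSym.quadratic_reciprocity_three_mod_four hp4 he₁4, hJpe₁]; norm_num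
  -- now e₂
  have he₁2 : e₁ ≠ 2 := by omega
  obtain ⟨c, hc⟩ : ∃ c : ZMod e₁, ¬IsSquare c :=
    FiniteField.exists_nonsquare (by rwa [ZMod.ringChar_zmod_n])
  have hc0 : c ≠ 0 := fun h => hc (h ▸ IsSquare.zero)
  have hcop2 : Nat.Coprime (4 * p) e₁ := by
    refine (he₁p.coprime_iff_not_dvd.mpr ?_).symm
    intro h
    have := Nat.le_of_dvd (by omega) h
    omega
  haveI : NeZero (4 * p * e₁) := ⟨Nat.mul_ne_zero (by omega) he₁p.pos.ne'⟩
  set C₂ := ZMod.chineseRemainder hcop2 with hC₂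
  set a₂ : ZMod (4 * p * e₁) := C₂.symm ((1 : ZMod (4 * p)), c) with ha₂def
  have ha₂ : IsUnit a₂ := by
    refine (IsUnit.of_mul_eq_one ((1 : ZMod (4 * p)), c⁻¹) ?_).map C₂.symm
    exact Prod.ext_iff.mpr ⟨one_mul 1, mul_inv_cancel₀ hc0⟩
  obtain ⟨e₂, he₂gt, he₂p, he₂mod⟩ := Nat.forall_exists_prime_gt_and_eq_mod ha₂ (4 * p * e₁)
  have hCe₂'' : ((e₂ : ZMod (4 * p) × ZMod e₁)) = ((1 : ZMod (4 * p)), c) := by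
    have : C₂ ((e₂ : ZMod (4 * p * e₁))) = C₂ a₂ := by rw [he₂mod]
    rwa [ha₂def, RingEquiv.apply_symm_apply, map_natCast] at this
  have he₂4p : (e₂ : ZMod (4 * p)) = 1 := by
    have := congrArg Prod.fst hCe₂''; simpa using this
  have he₂ze₁ : (e₂ : ZMod e₁) = c := by
    have := congrArg Prod.snd hCe₂''; simpa using this
  have hCe₂' : (e₂ : ZMod 4 × ZMod p) = 1 := by
    have h : C ((e₂ : ZMod (4 * p))) = C 1 := by rw [he₂4p]
    rwa [map_natCast, map_one] at h
  have h4e₂ : (e₂ : ZMod 4) = 1 := by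
    have := congrArg Prod.fst hCe₂'; simpa using this
  have he₂zp : (e₂ : ZMod p) = 1 := by
    have := congrArg Prod.snd hCe₂'; simpa using this
  have he₂4 : e₂ % 4 = 1 := by
    have h4 : (e₂ : ZMod 4) = ((1 : ℕ) : ZMod 4) := by rw [h4e₂]; norm_num
    have := (ZMod.natCast_eq_natCast_iff e₂ 1 4).mp h4
    simpa [Nat.ModEq] using this
  have hpodd : Odd p := by rw [Nat.odd_iff]; omega
  have he₁odd : Odd e₁ := by rw [Nat.odd_iff]; omega
  have hJ2 : jacobiSym (p : ℤ) e₂ = 1 := by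
    rw [jacobiSym.quadratic_reciprocity_one_mod_four' hpodd he₂4,
      ← jacobiSym.legendreSym.to_jacobiSym]
    refine (legendreSym.eq_one_iff' p ?_).mpr ?_
    · rw [he₂zp]; exact one_ne_zero
    · rw [he₂zp]; exact IsSquare.one
  have hJ3 : jacobiSym (e₁ : ℤ) e₂ = -1 := by
    rw [jacobiSym.quadratic_reciprocity_one_mod_four' he₁odd he₂4,
      ← jacobiSym.legendreSym.to_jacobiSym]
    exact (legendreSym.eq_neg_one_iff' e₁).mpr (he₂ze₁ ▸ hc)
  exact ⟨e₁, e₂, he₁p, he₂p, he₁4, he₂4, hJ1, hJ2, hJ3⟩
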